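/- Let (L,<) be an ordered field and K a dense subfield (with respect to the order topology). Then every integer part of (K,<) is an integer part of (L,<). -/

import Mathlib

/-- `I` is an integer part of the ordered field `F` restricted to the elements of a
set `S` (for `S = Set.univ` this is the usual notion): a discretely ordered subring
such that every `a ∈ S` satisfies `r ≤ a < r + 1` for some `r ∈ I`. -/
def IsIntegerPartOn {F : Type*} [Field F] [LinearOrder F] [IsStrictOrderedRing F] (I : Subring F) (S : Set F) : Prop :=
  (∀ r ∈ I, 0 < r → 1 ≤ r) ∧ (∀ a ∈ S, ∃ r ∈ I, r ≤ a ∧ a < r + 1)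

/-- If `K` is a dense subfield of an ordered field `(L,<)` (order-topology density)
then every integer part of `(K,<)` is an integer part of `(L,<)`. -/
theorem integer_part_of_dense_subfield {L : Type*} [Field L] [LinearOrder L] [IsStrictOrderedRing L]
    (K : Subfield L) (hd : ∀ a b : L, a < b → ∃ c ∈ K, a < c ∧ c < b)
    (I : Subring L) (hIK : (I : Set L) ⊆ K)
    (hI : IsIntegerPartOn I (K : Set L)) :
    IsIntegerPartOn I (Set.univ : Set L) := by
  refine ⟨hI.1, fun a _ => ?_⟩
  obtain ⟨c, hcK, hac, hca⟩ := hd a (a + 1) (by linarith)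
  obtain ⟨r, hrI, hrc, hcr⟩ := hI.2 c hcK
  rcases le_or_gt r a with h | h
  · exact ⟨r, hrI, h, by linarith⟩
  · exact ⟨r - 1, sub_mem hrI I.one_mem, by linarith, by linarith⟩
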